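/- Let k ≥ 2 be an integer and let (V,E) be a finite k-uniform hypergraph in which every connected component C satisfies (k−1)·e(C) ≤ v(C), where e(C) and v(C) denote the numbers of edges and vertices of C. Then (V,E) admits a (k−1,1)-orientation. In particular, a hypergraph all of whose components are hypertrees or unicyclic is (k−1,1)-orientable. -/

import Mathlib

open scoped Classical

/-- Two vertices touch if some hyperedge of `E` contains both. -/
def Touches {V : Type*} (E : Finset (Finset V)) (v w : V) : Prop :=
  ∃ e ∈ E, v ∈ e ∧ w ∈ e

/-- The connected component of a vertex `v`: all vertices joined to `v` by a sequence of
hyperedges in which consecutive hyperedges share a vertex. -/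
def component {V : Type*} (E : Finset (Finset V)) (v : V) : Set V :=
  {w | Relation.ReflTransGen (Touches E) v w}

/-- The edges of `E` belonging to the component `C` (those touching `C`). -/
noncomputable def componentEdges {V : Type*} (E : Finset (Finset V)) (C : Set V) : Finset (Finset V) :=
  E.filter fun e => ∃ w ∈ e, w ∈ C

section Aux

variable {V : Type*} [DecidableEq V] (E : Finset (Finset V))

lemma touches_symm {v w : V} (h : Touches E v w) : Touches E w v := by
  obtain ⟨e, he, hv, hw⟩ := h; exact ⟨e, he, hw, hv⟩

lemma mem_componentEdges {C : Set V} {e : Finset V} :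
    e ∈ componentEdges E C ↔ e ∈ E ∧ ∃ w ∈ e, w ∈ C := by
  simp [componentEdges]

lemma mem_component_of_mem_edge {v u w : V} {e : Finset V} (he : e ∈ E)
    (hw : w ∈ component E v) (hwe : w ∈ e) (hu : u ∈ e) : u ∈ component E v :=
  Relation.ReflTransGen.tail hw ⟨e, he, hwe, hu⟩

/-- When the component has an edge, the component equals the union of its edges. -/
lemma component_eq_biUnion {v : V}
    (hF : (componentEdges E (component E v)).Nonempty) :
    component E v = ↑((componentEdges E (component E v)).biUnion id) := by
  ext w
  simp only [Finset.coe_biUnion, Set.mem_iUnion, Finset.mem_coe, id]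
  constructor
  · intro hw
    rcases (Relation.ReflTransGen.cases_head hw) with h | ⟨x, hvx, _⟩
    · -- w = v
      subst h
      obtain ⟨e, he⟩ := hF
      rw [mem_componentEdges] at he
      obtain ⟨heE, u, hue, huC⟩ := he
      rcases (Relation.ReflTransGen.cases_head huC) with h' | ⟨y, hvy, _⟩
      · exact ⟨e, (mem_componentEdges E).2 ⟨heE, u, hue, huC⟩, by rw [h']; exact hue⟩
      · obtain ⟨e', he', hve', _⟩ := hvy
        exact ⟨e', (mem_componentEdges E).2 ⟨he', v, hve',
          Relation.ReflTransGen.refl⟩, hve'⟩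
    · -- there is a last step into w; use head on reverse direction instead
      rcases Relation.ReflTransGen.cases_tail hw with h | ⟨x, _, hxw⟩
      · obtain ⟨e, he, hve, _⟩ := hvx
        exact ⟨e, (mem_componentEdges E).2 ⟨he, v, hve, Relation.ReflTransGen.refl⟩,
          by rw [h]; exact hve⟩
      · obtain ⟨e, he, hxe, hwe⟩ := hxw
        exact ⟨e, (mem_componentEdges E).2 ⟨he, w, hwe, hw⟩, hwe⟩
  · rintro ⟨e, he, hwe⟩
    rw [mem_componentEdges] at he
    obtain ⟨heE, u, hue, huC⟩ := he
    exact mem_component_of_mem_edge E heE huC hue hwe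

/-- Connectivity: a proper nonempty subfamily of the component's edges can be extended
by an edge meeting its union. -/
lemma exists_touching_edge {v : V} {S : Finset (Finset V)}
    (hSF : S ⊆ componentEdges E (component E v)) (hSne : S.Nonempty)
    (hne : ((componentEdges E (component E v)) \ S).Nonempty) :
    ∃ e ∈ componentEdges E (component E v), e ∉ S ∧ ∃ u ∈ e, u ∈ S.biUnion id := by
  set C := component E v with hC
  set F := componentEdges E C with hFdef
  obtain ⟨e1, he1⟩ := hne
  rw [Finset.mem_sdiff] at he1
  obtain ⟨he1F, he1S⟩ := he1
  obtain ⟨e0, he0S⟩ := hSne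
  obtain ⟨he1E, u1, hu1e, hu1C⟩ := (mem_componentEdges E).1 he1F
  obtain ⟨he0E, u0, hu0e, hu0C⟩ := (mem_componentEdges E).1 (hSF he0S)
  -- u0 is connected to u1
  have hsymm : Symmetric (Touches E) := fun _ _ => touches_symm E
  have h01 : Relation.ReflTransGen (Touches E) u0 u1 :=
    haveI : Std.Symm (Touches E) := ⟨fun _ _ h => hsymm h⟩; (Std.Symm.symm _ _ hu0C).trans hu1C
  -- key induction: every vertex reachable from u0 is in ⋃S or we find the edge
  have key : ∀ w : V, Relation.ReflTransGen (Touches E) u0 w →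
      w ∈ S.biUnion id ∨
      ∃ e ∈ F, e ∉ S ∧ ∃ u ∈ e, u ∈ S.biUnion id := by
    intro w hw
    induction hw with
    | refl => exact Or.inl (Finset.mem_biUnion.2 ⟨e0, he0S, hu0e⟩)
    | tail hux hxw ih =>
      rcases ih with hx | hgoal
      · rename_i x w'
        obtain ⟨e, heE, hxe, hwe⟩ := hxw
        -- x ∈ ⋃S so x ∈ C
        have hxC : x ∈ C := by
          obtain ⟨f, hfS, hxf⟩ := Finset.mem_biUnion.1 hx
          obtain ⟨hfE, y, hyf, hyC⟩ := (mem_componentEdges E).1 (hSF hfS)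
          exact mem_component_of_mem_edge E hfE hyC hyf hxf
        have heF : e ∈ F := (mem_componentEdges E).2 ⟨heE, x, hxe, hxC⟩
        by_cases heS : e ∈ S
        · exact Or.inl (Finset.mem_biUnion.2 ⟨e, heS, hwe⟩)
        · exact Or.inr ⟨e, heF, heS, x, hxe, hx⟩
      · exact Or.inr hgoal
  rcases key u1 h01 with h | h
  · exact ⟨e1, he1F, he1S, u1, hu1e, h⟩
  · exact h

/-- Expansion lemma: adding the remaining edges of a connected component to a nonempty
subfamily grows the union by at most `k-1` per edge. -/
lemma expand (k : ℕ) (hE : ∀ e ∈ E, e.card = k) {v : V} :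
    ∀ (n : ℕ) (S : Finset (Finset V)), S ⊆ componentEdges E (component E v) → S.Nonempty →
      ((componentEdges E (component E v)) \ S).card = n →
      ((componentEdges E (component E v)).biUnion id).card ≤
        (S.biUnion id).card + (k - 1) * n := by
  set F := componentEdges E (component E v) with hFdef
  intro n
  induction n with
  | zero =>
    intro S hSF _ hcard
    have : F = S := Finset.Subset.antisymm
      (fun e he => by
        by_contra heS
        have : e ∈ F \ S := Finset.mem_sdiff.2 ⟨he, heS⟩
        simp [Finset.card_eq_zero.1 hcard] at this) hSF
    rw [this]; omega
  | succ n ih =>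
    intro S hSF hSne hcard
    have hne : (F \ S).Nonempty := Finset.card_pos.1 (by omega)
    obtain ⟨e, heF, heS, u, hue, huS⟩ := exists_touching_edge E hSF hSne hne
    have hsub : (insert e S).biUnion id ⊆ e ∪ S.biUnion id := by
      intro x hx
      rcases Finset.mem_biUnion.1 hx with ⟨f, hf, hxf⟩
      rcases Finset.mem_insert.1 hf with h | h
      · subst h; exact Finset.mem_union_left _ hxf
      · exact Finset.mem_union_right _ (Finset.mem_biUnion.2 ⟨f, h, hxf⟩)
    have hcard' : ((insert e S).biUnion id).card ≤ (S.biUnion id).card + (k - 1) := by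
      have h1 : ((insert e S).biUnion id).card ≤ (e ∪ S.biUnion id).card :=
        Finset.card_le_card hsub
      have h2 : (e ∪ S.biUnion id).card ≤ (e \ S.biUnion id).card + (S.biUnion id).card := by
        rw [← Finset.card_sdiff_add_card]
      have h3 : (e \ S.biUnion id).card ≤ k - 1 := by
        have hk : e.card = k := hE e ((mem_componentEdges E).1 heF).1
        have : (e \ S.biUnion id).card < e.card :=
          Finset.card_lt_card ⟨Finset.sdiff_subset, fun hsub' => by
            have := hsub' hue
            exact (Finset.mem_sdiff.1 this).2 huS⟩
        omega
      omega
    have hcard'' : (F \ insert e S).card = n := by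
      have : F \ insert e S = (F \ S).erase e := by
        ext f; simp [Finset.mem_sdiff, Finset.mem_erase, Finset.mem_insert]; tauto
      rw [this, Finset.card_erase_of_mem (Finset.mem_sdiff.2 ⟨heF, heS⟩), hcard]
      omega
    have := ih (insert e S) (Finset.insert_subset heF hSF)
      (Finset.insert_nonempty _ _) hcard''
    calc (F.biUnion id).card ≤ ((insert e S).biUnion id).card + (k-1) * n := this
      _ ≤ (S.biUnion id).card + (k-1) + (k-1)*n := by omega
      _ = (S.biUnion id).card + (k-1)*(n+1) := by ring

end Aux

section Hall

variable {V : Type*} [Fintype V] [DecidableEq V]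

/-- The Hall condition for choosing disjoint `(k-1)`-subsets. -/
lemma hall_condition (k : ℕ) (hk : 2 ≤ k)
    (E : Finset (Finset V)) (hE : ∀ e ∈ E, e.card = k)
    (hexcess : ∀ v : V,
      (k - 1) * (componentEdges E (component E v)).card ≤ (component E v).ncard) :
    ∀ (n : ℕ) (S : Finset (Finset V)), S.card ≤ n → S ⊆ E →
      (k - 1) * S.card ≤ (S.biUnion id).card := by
  intro n
  induction n with
  | zero =>
    intro S hcard _
    interval_cases h : S.card <;> simp_all
  | succ n ih =>
    intro S hScard hSE
    rcases S.eq_empty_or_nonempty with rfl | ⟨e0, he0⟩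
    · simp
    have he0E : e0 ∈ E := hSE he0
    have he0card : e0.card = k := hE e0 he0E
    obtain ⟨w0, hw0⟩ : e0.Nonempty := Finset.card_pos.1 (by omega)
    have hw0C : w0 ∈ component E w0 := Relation.ReflTransGen.refl
    have he0F : e0 ∈ componentEdges E (component E w0) :=
      (mem_componentEdges E).2 ⟨he0E, w0, hw0, hw0C⟩
    set S₁ := S.filter (· ∈ componentEdges E (component E w0)) with hS₁
    set S₂ := S.filter (· ∉ componentEdges E (component E w0)) with hS₂
    have hS₁F : S₁ ⊆ componentEdges E (component E w0) :=
      fun e he => (Finset.mem_filter.1 he).2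
    have he0S₁ : e0 ∈ S₁ := Finset.mem_filter.2 ⟨he0, he0F⟩
    -- part 1 : (k-1) * S₁.card ≤ (S₁.biUnion id).card
    have hFne : (componentEdges E (component E w0)).Nonempty := ⟨e0, he0F⟩
    have hCcard : (component E w0).ncard =
        ((componentEdges E (component E w0)).biUnion id).card := by
      conv_lhs => rw [component_eq_biUnion E hFne]
      rw [Set.ncard_coe_finset]
    have hexp := expand E k hE ((componentEdges E (component E w0) \ S₁).card) S₁ hS₁F
      ⟨e0, he0S₁⟩ rfl
    have hsplit : (k-1) * (componentEdges E (component E w0)).card =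
        (k-1) * S₁.card + (k-1) * (componentEdges E (component E w0) \ S₁).card := by
      rw [Finset.card_sdiff_of_subset hS₁F]
      have := Finset.card_le_card hS₁F
      rw [← Nat.mul_add, Nat.add_sub_cancel' this]
    have hexcess' := hexcess w0
    rw [hCcard] at hexcess'
    have part1 : (k-1) * S₁.card ≤ (S₁.biUnion id).card := by omega
    -- part 2 : induction for S₂
    have hS₂sub : S₂ ⊆ S := Finset.filter_subset _ _
    have he0nS₂ : e0 ∉ S₂ := fun h => (Finset.mem_filter.1 h).2 he0F
    have hS₂lt : S₂.card < S.card := Finset.card_lt_card ⟨hS₂sub, fun h => he0nS₂ (h he0)⟩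
    have part2 : (k-1) * S₂.card ≤ (S₂.biUnion id).card :=
      ih S₂ (by omega) (hS₂sub.trans hSE)
    -- disjointness of the two unions
    have hdisj : Disjoint (S₁.biUnion id) (S₂.biUnion id) := by
      rw [Finset.disjoint_left]
      intro x hx1 hx2
      obtain ⟨f1, hf1, hxf1⟩ := Finset.mem_biUnion.1 hx1
      obtain ⟨f2, hf2, hxf2⟩ := Finset.mem_biUnion.1 hx2
      have hxC : x ∈ component E w0 := by
        obtain ⟨hf1E, y, hyf, hyC⟩ := (mem_componentEdges E).1 (hS₁F hf1)
        exact mem_component_of_mem_edge E hf1E hyC hyf hxf1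
      have hf2F : f2 ∈ componentEdges E (component E w0) :=
        (mem_componentEdges E).2 ⟨hSE (hS₂sub hf2), x, hxf2, hxC⟩
      exact (Finset.mem_filter.1 hf2).2 hf2F
    have hunion : S.biUnion id = S₁.biUnion id ∪ S₂.biUnion id := by
      ext x
      simp only [Finset.mem_biUnion, Finset.mem_union, hS₁, hS₂, Finset.mem_filter, id]
      constructor
      · rintro ⟨f, hf, hxf⟩
        by_cases hfF : f ∈ componentEdges E (component E w0)
        · exact Or.inl ⟨f, ⟨hf, hfF⟩, hxf⟩
        · exact Or.inr ⟨f, ⟨hf, hfF⟩, hxf⟩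
      · rintro (⟨f, ⟨hf, _⟩, hxf⟩ | ⟨f, ⟨hf, _⟩, hxf⟩) <;> exact ⟨f, hf, hxf⟩
    have hcards : (S.biUnion id).card = (S₁.biUnion id).card + (S₂.biUnion id).card := by
      rw [hunion, Finset.card_union_of_disjoint hdisj]
    have hScards : S.card = S₁.card + S₂.card := by
      rw [hS₁, hS₂,
        Finset.card_filter_add_card_filter_not (p := (· ∈ componentEdges E (component E w0)))]
    rw [hScards, hcards]
    have : (k-1) * (S₁.card + S₂.card) = (k-1)*S₁.card + (k-1)*S₂.card := by ring
    omega

end Hall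

/-- If every connected component `C` of a finite `k`-uniform hypergraph
satisfies `(k-1)·e(C) ≤ v(C)`, then the hypergraph admits a `(k-1,1)`-orientation. -/
theorem orientable_of_small_excess {V : Type*} [Fintype V] [DecidableEq V]
    (k : ℕ) (hk : 2 ≤ k)
    (E : Finset (Finset V)) (hE : ∀ e ∈ E, e.card = k)
    (hexcess : ∀ v : V,
      (k - 1) * (componentEdges E (component E v)).card ≤ (component E v).ncard) :
    ∃ D : Finset V → Finset V,
      (∀ e ∈ E, D e ⊆ e ∧ (D e).card = k - 1) ∧
      (∀ v : V, (E.filter fun e => v ∈ D e).card ≤ 1) := by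
  -- double each edge `k-1` times and apply Hall's theorem
  set ι := {e // e ∈ E} × Fin (k - 1) with hι
  set t : ι → Finset V := fun p => p.1.1 with ht
  have hall : ∀ s : Finset ι, s.card ≤ (s.biUnion t).card := by
    intro s
    set S := s.image (fun p : ι => p.1.1) with hS
    have hSE : S ⊆ E := by
      intro e he
      obtain ⟨p, _, rfl⟩ := Finset.mem_image.1 he
      exact p.1.2
    have hbi : s.biUnion t = S.biUnion id := by
      rw [hS, Finset.image_biUnion]
      rfl
    have h1 : s.card ≤ (k - 1) * S.card := by
      apply Finset.card_le_mul_card_image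
      intro e he
      -- fiber over e injects into Fin (k-1)
      have : (s.filter (fun p : ι => p.1.1 = e)).card ≤ (Finset.univ : Finset (Fin (k-1))).card := by
        apply Finset.card_le_card_of_injOn (fun p => p.2)
        · intro p _; exact Finset.mem_univ _
        · intro p hp q hq hpq
          have hpe := (Finset.mem_filter.1 hp).2
          have hqe := (Finset.mem_filter.1 hq).2
          have : p.1 = q.1 := Subtype.ext (hpe.trans hqe.symm)
          exact Prod.ext this hpq
      simpa using this
    have h2 : (k - 1) * S.card ≤ (S.biUnion id).card :=
      hall_condition k hk E hE hexcess S.card S le_rfl hSE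
    rw [hbi]; omega
  obtain ⟨f, hfinj, hft⟩ := (Finset.all_card_le_biUnion_card_iff_exists_injective t).1 hall
  refine ⟨fun e => if h : e ∈ E then Finset.univ.image (fun i : Fin (k-1) => f (⟨e, h⟩, i)) else ∅,
    ?_, ?_⟩
  · intro e he
    dsimp only
    rw [dif_pos he]
    constructor
    · intro x hx
      obtain ⟨i, _, rfl⟩ := Finset.mem_image.1 hx
      exact hft (⟨e, he⟩, i)
    · rw [Finset.card_image_of_injective _ (fun i j hij => by
        have := hfinj hij
        exact (Prod.ext_iff.1 this).2)]
      simp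
  · intro v
    rw [Finset.card_le_one]
    intro e he e' he'
    obtain ⟨heE, hv⟩ := Finset.mem_filter.1 he
    obtain ⟨heE', hv'⟩ := Finset.mem_filter.1 he'
    dsimp only at hv hv'
    rw [dif_pos heE] at hv
    rw [dif_pos heE'] at hv'
    obtain ⟨i, _, hi⟩ := Finset.mem_image.1 hv
    obtain ⟨j, _, hj⟩ := Finset.mem_image.1 hv'
    have := hfinj (hi.trans hj.symm)
    have := (Prod.ext_iff.1 this).1
    exact congrArg Subtype.val this
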